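/- Let d ≥ 1 and let μ and ν be probability measures on ℝ^d, both absolutely continuous with respect to Lebesgue measure. Let R = ∇φ with φ convex satisfy R_#μ = ν, and let Q = ∇ψ with ψ convex satisfy Q_#ν = μ. Then Q(R(x)) = x for μ-almost every x ∈ ℝ^d, and R(Q(y)) = y for ν-almost every y ∈ ℝ^d. -/

import Mathlib

open MeasureTheory Metric Set Filter Topology
open scoped RealInnerProductSpace

variable {F : Type*} [NormedAddCommGroup F] [InnerProductSpace ℝ F] [CompleteSpace F]

/-- derivative of a convex function along a segment -/
lemma aux_hasDerivAt_line (f : F → ℝ) {y : F} (hd : DifferentiableAt ℝ f y) (v : F) :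
    HasDerivAt (fun t : ℝ => f (y + t • v)) ⟪gradient f y, v⟫ 0 := by
  have hline : HasDerivAt (fun t : ℝ => y + t • v) v 0 := by
    simpa using ((hasDerivAt_id (0:ℝ)).smul_const v).const_add y
  have hgrad : HasFDerivAt f (InnerProductSpace.toDual ℝ F (gradient f y)) y :=
    (hasGradientAt_iff_hasFDerivAt).1 hd.hasGradientAt
  have h0 : (0:ℝ) • v = 0 := zero_smul _ _
  have : HasFDerivAt f (InnerProductSpace.toDual ℝ F (gradient f y)) (y + (0:ℝ) • v) := by
    simpa [h0] using hgrad
  have := this.comp_hasDerivAt 0 hline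
  simpa [InnerProductSpace.toDual_apply_apply, Function.comp_def] using this

/-- a slope upper bound passes to the derivative -/
lemma aux_deriv_le {g : ℝ → ℝ} {g' C : ℝ} (h : HasDerivAt g g' 0)
    (hC : ∀ t : ℝ, t ∈ Ioc (0:ℝ) 1 → (g t - g 0) / t ≤ C) : g' ≤ C := by
  have hs : Filter.Tendsto (slope g 0) (𝓝[>] 0) (𝓝 g') :=
    ((hasDerivAt_iff_tendsto_slope.1 h).mono_left
      (nhdsWithin_mono _ (fun t ht => ne_of_gt ht)))
  refine le_of_tendsto hs ?_
  filter_upwards [Ioc_mem_nhdsGT_of_mem (by norm_num : (0:ℝ) ∈ Ico (0:ℝ) 1)] with t ht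
  simpa [slope_def_field, div_eq_inv_mul] using hC t ht

/-- subgradient inequality for a differentiable convex function -/
lemma aux_convex_grad_le (f : F → ℝ) (hf : ConvexOn ℝ univ f) {y : F}
    (hd : DifferentiableAt ℝ f y) (z : F) : f y + ⟪gradient f y, z - y⟫ ≤ f z := by
  have hder := aux_hasDerivAt_line f hd (z - y)
  have key : ⟪gradient f y, z - y⟫ ≤ f z - f y := by
    refine aux_deriv_le hder ?_
    intro t ht
    have h1 : f (y + t • (z - y)) ≤ (1 - t) * f y + t * f z := by
      have := hf.2 (mem_univ y) (mem_univ z) (by linarith [ht.2] : (0:ℝ) ≤ 1 - t)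
        (le_of_lt ht.1) (by ring)
      have hpt : (1 - t) • y + t • z = y + t • (z - y) := by
        simp [smul_sub, sub_smul]; abel
      simpa [hpt, smul_eq_mul] using this
    have h0 : f (y + (0:ℝ) • (z - y)) = f y := by simp
    rw [h0, div_le_iff₀ ht.1]
    nlinarith [ht.1]
  linarith

/-- uniqueness of subgradients at differentiability points -/
lemma aux_subgrad_unique (f : F → ℝ) {y x : F} (hd : DifferentiableAt ℝ f y)
    (hx : ∀ z, f y + ⟪x, z - y⟫ ≤ f z) : x = gradient f y := by
  have key : ∀ v : F, ⟪x, v⟫ ≤ ⟪gradient f y, v⟫ := by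
    intro v
    have hder := aux_hasDerivAt_line f hd v
    have hs : Filter.Tendsto (slope (fun t : ℝ => f (y + t • v)) 0) (𝓝[>] 0)
        (𝓝 ⟪gradient f y, v⟫) :=
      ((hasDerivAt_iff_tendsto_slope.1 hder).mono_left
        (nhdsWithin_mono _ (fun t ht => ne_of_gt ht)))
    refine ge_of_tendsto hs ?_
    filter_upwards [self_mem_nhdsWithin] with t (ht : 0 < t)
    have h1 : f y + ⟪x, (y + t • v) - y⟫ ≤ f (y + t • v) := hx _
    have h2 : ⟪x, (y + t • v) - y⟫ = t * ⟪x, v⟫ := by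
      simp [inner_smul_right]
    rw [h2] at h1
    have : t * ⟪x, v⟫ ≤ f (y + t • v) - f y := by linarith
    have h0 : f (y + (0:ℝ) • v) = f y := by simp
    rw [slope_def_field, sub_zero, h0, le_div_iff₀ ht]
    simpa [mul_comm] using this
  have h := key (x - gradient f y)
  have h2 : ⟪x - gradient f y, x - gradient f y⟫ ≤ 0 := by
    have := sub_nonneg.2 h
    have hrw : ⟪gradient f y, x - gradient f y⟫ - ⟪x, x - gradient f y⟫
        = -⟪x - gradient f y, x - gradient f y⟫ := by
      rw [← inner_sub_left, ← inner_neg_left, neg_sub]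
    nlinarith [this, hrw]
  have := real_inner_self_nonpos.1 h2
  exact sub_eq_zero.1 this
variable {F : Type*} [NormedAddCommGroup F] [InnerProductSpace ℝ F] [CompleteSpace F]

/-- Legendre conjugate, EReal-valued -/
noncomputable def aux_conj (f : F → ℝ) (x : F) : EReal :=
  ⨆ z : F, ((⟪x, z⟫ - f z : ℝ) : EReal)

set_option linter.unusedSectionVars false in
lemma aux_conj_measurable [MeasurableSpace F] [BorelSpace F] (f : F → ℝ) :
    Measurable (aux_conj f) := by
  apply LowerSemicontinuous.measurable
  apply lowerSemicontinuous_iSup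
  intro z
  exact (continuous_coe_real_ereal.comp
    ((continuous_id.inner continuous_const).sub continuous_const)).lowerSemicontinuous

lemma aux_conj_young (f : F → ℝ) (x z : F) :
    ((⟪x, z⟫ - f z : ℝ) : EReal) ≤ aux_conj f x :=
  le_iSup (fun z : F => ((⟪x, z⟫ - f z : ℝ) : EReal)) z

lemma aux_conj_ne_bot (f : F → ℝ) (x : F) : aux_conj f x ≠ ⊥ :=
  fun h => by simpa [h] using aux_conj_young f x 0

lemma aux_conj_eq (f : F → ℝ) (hf : ConvexOn ℝ univ f) {y : F}
    (hd : DifferentiableAt ℝ f y) :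
    aux_conj f (gradient f y) = ((⟪gradient f y, y⟫ - f y : ℝ) : EReal) := by
  refine le_antisymm (iSup_le fun z => ?_)
    (le_iSup (fun z : F => ((⟪gradient f y, z⟫ - f z : ℝ) : EReal)) y)
  rw [EReal.coe_le_coe_iff]
  have := aux_convex_grad_le f hf hd z
  rw [inner_sub_right] at this
  linarith
/-- a real-valued convex function on Euclidean space is differentiable a.e. -/
lemma aux_convex_ae_diff {d : ℕ} (f : EuclideanSpace ℝ (Fin d) → ℝ)
    (hf : ConvexOn ℝ univ f) :
    ∀ᵐ x ∂(volume : Measure (EuclideanSpace ℝ (Fin d))), DifferentiableAt ℝ f x := by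
  have hcont : Continuous f := by
    rw [← continuousOn_univ]
    simpa using hf.continuousOn isOpen_univ
  have hball : ∀ n : ℕ, ∀ᵐ x ∂(volume : Measure (EuclideanSpace ℝ (Fin d))),
      x ∈ ball (0 : EuclideanSpace ℝ (Fin d)) n → DifferentiableAt ℝ f x := by
    intro n
    have hconv : ConvexOn ℝ (ball (0 : EuclideanSpace ℝ (Fin d)) ((n : ℝ) + 1)) f :=
      hf.subset (subset_univ _) (convex_ball _ _)
    have hbdd : Bornology.IsBounded (f '' ball (0 : EuclideanSpace ℝ (Fin d)) ((n : ℝ) + 1)) := by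
      have : Bornology.IsBounded (f '' closedBall (0 : EuclideanSpace ℝ (Fin d)) ((n : ℝ) + 1)) :=
        ((isCompact_closedBall _ _).image hcont).isBounded
      exact this.subset (image_mono ball_subset_closedBall)
    obtain ⟨K, hK⟩ := hconv.exists_lipschitzOnWith_of_isBounded
      (lt_add_one (n : ℝ)) hbdd
    filter_upwards [hK.ae_differentiableWithinAt_of_mem] with x hx hxb
    exact (hx hxb).differentiableAt ((isOpen_ball).mem_nhds hxb)
  rw [← ae_all_iff] at hball
  filter_upwards [hball] with x hx
  obtain ⟨n, hn⟩ := exists_nat_gt ‖x‖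
  exact hx n (by simpa [mem_ball, dist_eq_norm] using hn)

/-- if `S` preserves a finite measure and `f ∘ S ≤ f` a.e. then `f ∘ S = f` a.e. -/
lemma aux_distribution {α : Type*} [MeasurableSpace α] (μ : Measure α) [IsFiniteMeasure μ]
    {f : α → ℝ} (hf : Measurable f) {S : α → α} (hS : Measurable S)
    (hmap : μ.map S = μ) (hle : ∀ᵐ x ∂μ, f (S x) ≤ f x) :
    ∀ᵐ x ∂μ, f (S x) = f x := by
  have hnull : ∀ q : ℚ, μ {x | f (S x) < q ∧ (q : ℝ) < f x} = 0 := by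
    intro q
    set A : Set α := {x | (q : ℝ) < f x} with hA
    have hAm : MeasurableSet A := measurableSet_lt measurable_const hf
    have h1 : μ (S ⁻¹' A) = μ A := by
      rw [← Measure.map_apply hS hAm, hmap]
    have h2 : μ (S ⁻¹' A \ A) = 0 := by
      refine measure_mono_null ?_ (ae_iff.1 hle)
      intro x ⟨hx1, hx2⟩
      simp only [mem_setOf_eq, not_le]
      by_contra h
      push_neg at h
      exact hx2 (lt_of_lt_of_le hx1 h)
    have h3 : μ (S ⁻¹' A ∩ A) = μ A := by
      have hh := measure_inter_add_diff (μ := μ) (S ⁻¹' A) hAm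
      rw [h2, add_zero] at hh
      rw [hh, h1]
    have h4 : μ (A \ S ⁻¹' A) = 0 := by
      have hsplit := measure_inter_add_diff (μ := μ) A (hS hAm)
      rw [inter_comm, h3] at hsplit
      have hfin : μ A ≠ ⊤ := measure_ne_top μ A
      exact (ENNReal.add_right_inj hfin).1 (hsplit.trans (add_zero (μ A)).symm)
    refine measure_mono_null ?_ h4
    intro x ⟨hx1, hx2⟩
    exact ⟨hx2, fun h => absurd h (not_lt.2 hx1.le)⟩
  have hge : ∀ᵐ x ∂μ, ¬ f (S x) < f x := by
    rw [ae_iff]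
    simp only [not_not]
    refine measure_mono_null ?_ (measure_iUnion_null hnull)
    intro x hx
    obtain ⟨q, hq1, hq2⟩ := exists_rat_btwn (show f (S x) < f x from hx)
    exact mem_iUnion.2 ⟨q, hq1, hq2⟩
  filter_upwards [hle, hge] with x h1 h2
  exact le_antisymm h1 (not_lt.1 h2)
/-- the key asymmetric lemma -/
lemma aux_key (d : ℕ) (μ ν : Measure (EuclideanSpace ℝ (Fin d)))
    [IsProbabilityMeasure μ] [IsProbabilityMeasure ν]
    (hμ : μ ≪ volume) (hν : ν ≪ volume)
    (φ ψ : EuclideanSpace ℝ (Fin d) → ℝ)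
    (hφ : ConvexOn ℝ Set.univ φ) (hψ : ConvexOn ℝ Set.univ ψ)
    (R Q : EuclideanSpace ℝ (Fin d) → EuclideanSpace ℝ (Fin d))
    (hR : ∀ x, R x = gradient φ x) (hQ : ∀ y, Q y = gradient ψ y)
    (hpushR : μ.map R = ν) (hpushQ : ν.map Q = μ) :
    ∀ᵐ x ∂μ, Q (R x) = x := by
  have hRae : AEMeasurable R μ := by
    by_contra h
    rw [Measure.map_of_not_aemeasurable h] at hpushR
    exact (IsProbabilityMeasure.ne_zero ν) hpushR.symm
  have hQae : AEMeasurable Q ν := by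
    by_contra h
    rw [Measure.map_of_not_aemeasurable h] at hpushQ
    exact (IsProbabilityMeasure.ne_zero μ) hpushQ.symm
  have hQae' : AEMeasurable Q (μ.map R) := hpushR ▸ hQae
  have hSae : AEMeasurable (Q ∘ R) μ := hQae'.comp_aemeasurable hRae
  have hmapS : μ.map (Q ∘ R) = μ := by
    rw [← AEMeasurable.map_map_of_aemeasurable hQae' hRae, hpushR, hpushQ]
  have hφcont : Continuous φ := by
    rw [← continuousOn_univ]
    simpa using hφ.continuousOn isOpen_univ
  have hφd : ∀ᵐ x ∂μ, DifferentiableAt ℝ φ x :=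
    (aux_convex_ae_diff φ hφ).filter_mono hμ.ae_le
  have hψdν : ∀ᵐ y ∂ν, DifferentiableAt ℝ ψ y :=
    (aux_convex_ae_diff ψ hψ).filter_mono hν.ae_le
  have hψdR : ∀ᵐ x ∂μ, DifferentiableAt ℝ ψ (R x) := by
    apply ae_of_ae_map hRae
    rw [hpushR]; exact hψdν
  have hfinset : MeasurableSet {x : EuclideanSpace ℝ (Fin d) | aux_conj ψ x ≠ ⊤} :=
    (aux_conj_measurable ψ (measurableSet_singleton (⊤ : EReal))).compl
  have hfin : ∀ᵐ x ∂μ, aux_conj ψ x ≠ ⊤ := by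
    rw [← hpushQ, MeasureTheory.ae_map_iff hQae hfinset]
    filter_upwards [hψdν] with y hy
    rw [hQ, aux_conj_eq ψ hψ hy]
    exact EReal.coe_ne_top _
  set Hr : EuclideanSpace ℝ (Fin d) → ℝ := fun x => (aux_conj ψ x).toReal - φ x with hHrdef
  have hHrm : Measurable Hr :=
    ((aux_conj_measurable ψ).ereal_toReal).sub hφcont.measurable
  have hmapS₀ : μ.map (hSae.mk (Q ∘ R)) = μ := by
    rw [← Measure.map_congr hSae.ae_eq_mk]; exact hmapS
  have hmain : ∀ᵐ x ∂μ,
      0 ≤ ψ (R x) + (aux_conj ψ x).toReal - ⟪x, R x⟫ ∧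
      0 ≤ φ (Q (R x)) + (aux_conj φ (R x)).toReal - ⟪Q (R x), R x⟫ ∧
      (ψ (R x) + (aux_conj ψ x).toReal - ⟪x, R x⟫)
        + (φ (Q (R x)) + (aux_conj φ (R x)).toReal - ⟪Q (R x), R x⟫)
        = Hr x - Hr (Q (R x)) := by
    filter_upwards [hφd, hψdR, hfin] with x hdx hdRx hfx
    have e1 : aux_conj φ (R x) = ((⟪R x, x⟫ - φ x : ℝ) : EReal) := by
      rw [hR x]; exact aux_conj_eq φ hφ hdx
    have e2 : aux_conj ψ (Q (R x)) = ((⟪Q (R x), R x⟫ - ψ (R x) : ℝ) : EReal) := by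
      rw [hQ (R x)]; exact aux_conj_eq ψ hψ hdRx
    have ht1 : (aux_conj φ (R x)).toReal = ⟪R x, x⟫ - φ x := by
      rw [e1]; exact EReal.toReal_coe _
    have ht2 : (aux_conj ψ (Q (R x))).toReal = ⟪Q (R x), R x⟫ - ψ (R x) := by
      rw [e2]; exact EReal.toReal_coe _
    have e3 : aux_conj ψ x = (((aux_conj ψ x).toReal : ℝ) : EReal) :=
      (EReal.coe_toReal hfx (aux_conj_ne_bot ψ x)).symm
    have hic : ⟪x, R x⟫ = ⟪R x, x⟫ := real_inner_comm _ _
    refine ⟨?_, ?_, ?_⟩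
    · have hy := aux_conj_young ψ x (R x)
      rw [e3, EReal.coe_le_coe_iff] at hy
      linarith
    · have hy := aux_conj_young φ (R x) (Q (R x))
      rw [e1, EReal.coe_le_coe_iff] at hy
      rw [ht1]
      have : ⟪R x, Q (R x)⟫ = ⟪Q (R x), R x⟫ := real_inner_comm _ _
      linarith
    · simp only [hHrdef]
      rw [ht1, ht2]
      linarith
  have hle : ∀ᵐ x ∂μ, Hr (hSae.mk (Q ∘ R) x) ≤ Hr x := by
    filter_upwards [hmain, hSae.ae_eq_mk] with x hx hsx
    rw [← hsx]
    have : (Q ∘ R) x = Q (R x) := rfl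
    rw [this]
    linarith [hx.1, hx.2.1, hx.2.2]
  have heq := aux_distribution μ hHrm hSae.measurable_mk hmapS₀ hle
  have hDzero : ∀ᵐ x ∂μ, ψ (R x) + (aux_conj ψ x).toReal - ⟪x, R x⟫ = 0 := by
    filter_upwards [hmain, heq, hSae.ae_eq_mk] with x hx h2 hsx
    rw [← hsx] at h2
    have : (Q ∘ R) x = Q (R x) := rfl
    rw [this] at h2
    linarith [hx.1, hx.2.1, hx.2.2]
  filter_upwards [hDzero, hψdR, hfin] with x hx hdRx hfx
  have htr : (aux_conj ψ x).toReal = ⟪x, R x⟫ - ψ (R x) := by linarith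
  have hconj : aux_conj ψ x = ((⟪x, R x⟫ - ψ (R x) : ℝ) : EReal) := by
    rw [← htr, EReal.coe_toReal hfx (aux_conj_ne_bot ψ x)]
  have hsub : ∀ z, ψ (R x) + ⟪x, z - R x⟫ ≤ ψ z := by
    intro z
    have hy := aux_conj_young ψ x z
    rw [hconj, EReal.coe_le_coe_iff] at hy
    rw [inner_sub_right]
    linarith
  have := aux_subgrad_unique ψ hdRx hsub
  rw [hQ]
  exact this.symm

open MeasureTheory

/-- McCann's theorem (inversion part): the rank map `R = ∇φ` pushing `μ` to `ν`
and the quantile map `Q = ∇ψ` pushing `ν` to `μ` are inverse to each other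
almost everywhere. -/
theorem mccann_inversion (d : ℕ) (hd : 1 ≤ d)
    (μ ν : Measure (EuclideanSpace ℝ (Fin d)))
    [IsProbabilityMeasure μ] [IsProbabilityMeasure ν]
    (hμ : μ ≪ volume) (hν : ν ≪ volume)
    (φ ψ : EuclideanSpace ℝ (Fin d) → ℝ)
    (hφ : ConvexOn ℝ Set.univ φ) (hψ : ConvexOn ℝ Set.univ ψ)
    (R Q : EuclideanSpace ℝ (Fin d) → EuclideanSpace ℝ (Fin d))
    (hR : ∀ x, R x = gradient φ x) (hQ : ∀ y, Q y = gradient ψ y)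
    (hpushR : μ.map R = ν) (hpushQ : ν.map Q = μ) :
    (∀ᵐ x ∂μ, Q (R x) = x) ∧ (∀ᵐ y ∂ν, R (Q y) = y) :=
  ⟨aux_key d μ ν hμ hν φ ψ hφ hψ R Q hR hQ hpushR hpushQ,
   aux_key d ν μ hν hμ ψ φ hψ hφ Q R hQ hR hpushQ hpushR⟩
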